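/- Let (Z, Z_ρ) be a centered bivariate Gaussian vector with unit variances and correlation ρ ∈ (−1,1). Then for every u > 0, P(Z > u, Z_ρ > u) ≤ ((1+ρ)²/(2π u² √(1−ρ²))) exp(−u²/(1+ρ)). -/

import Mathlib

open Real

section Aux
open MeasureTheory Set Filter Topology


lemma phi_integrableOn (b c u : ℝ) (hb : 0 < b) :
    IntegrableOn (fun t => (t - c) * Real.exp (-b * (t - c)^2)) (Set.Ioi u) := by
  have h := (integrable_mul_exp_neg_mul_sq hb).comp_sub_right c
  exact h.integrableOn

lemma phi_integral (b c u : ℝ) (hb : 0 < b) :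
    ∫ t in Set.Ioi u, (t - c) * Real.exp (-b * (t - c)^2)
      = Real.exp (-b * (u - c)^2) / (2 * b) := by
  have hderiv : ∀ t ∈ Set.Ici u, HasDerivAt (fun t => -(Real.exp (-b * (t - c)^2) / (2 * b)))
      ((t - c) * Real.exp (-b * (t - c)^2)) t := by
    intro t _
    have h1 : HasDerivAt (fun t : ℝ => (t - c)^2) (2 * (t - c)) t := by
      simpa using ((hasDerivAt_id t).sub_const c).fun_pow 2
    have h2 := ((h1.const_mul (-b)).exp.div_const (2 * b)).fun_neg
    refine h2.congr_deriv ?_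
    field_simp
  have htend : Tendsto (fun t : ℝ => -(Real.exp (-b * (t - c)^2) / (2 * b))) atTop (𝓝 0) := by
    have h1 : Tendsto (fun t : ℝ => (t - c)^2) atTop atTop := by
      have := tendsto_atTop_add_const_right atTop (-c) tendsto_id
      simpa [sub_eq_add_neg, pow_two] using this.atTop_mul_atTop₀ this
    have h2 : Tendsto (fun t : ℝ => -b * (t - c)^2) atTop atBot :=
      h1.const_mul_atTop_of_neg (by linarith)
    have h3 : Tendsto (fun t : ℝ => Real.exp (-b * (t - c)^2)) atTop (𝓝 0) :=
      Real.tendsto_exp_atBot.comp h2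
    simpa using (h3.div_const (2 * b)).neg
  have := integral_Ioi_of_hasDerivAt_of_tendsto' hderiv (phi_integrableOn b c u hb) htend
  rw [this]; ring

lemma double_int_bound (u b K c : ℝ) (hb : 0 < b) (hK : 0 ≤ K) (hc : c < u)
    (f : ℝ → ℝ → ℝ) (hf0 : ∀ z w, 0 ≤ f z w)
    (hfle : ∀ z ∈ Set.Ioi u, ∀ w ∈ Set.Ioi u,
      f z w ≤ K * ((z - c) * Real.exp (-b * (z - c)^2)) * ((w - c) * Real.exp (-b * (w - c)^2))) :
    (∫ z in Set.Ioi u, ∫ w in Set.Ioi u, f z w)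
      ≤ K * (Real.exp (-b * (u - c)^2) / (2 * b))^2 := by
  set φ : ℝ → ℝ := fun t => (t - c) * Real.exp (-b * (t - c)^2) with hφ
  set V : ℝ := Real.exp (-b * (u - c)^2) / (2 * b) with hV
  have hφint : IntegrableOn φ (Set.Ioi u) := phi_integrableOn b c u hb
  have hφval : ∫ t in Set.Ioi u, φ t = V := phi_integral b c u hb
  have hVpos : 0 < V := div_pos (Real.exp_pos _) (by linarith)
  have hφpos : ∀ t ∈ Set.Ioi u, 0 ≤ φ t := fun t ht =>
    mul_nonneg (by simp only [Set.mem_Ioi] at ht; linarith) (Real.exp_pos _).le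
  -- inner bound
  have hinner : ∀ z ∈ Set.Ioi u, (∫ w in Set.Ioi u, f z w) ≤ K * φ z * V := by
    intro z hz
    have hgi : Integrable (fun w => K * φ z * φ w) (volume.restrict (Set.Ioi u)) :=
      hφint.const_mul (K * φ z)
    have hle : (fun w => f z w) ≤ᵐ[volume.restrict (Set.Ioi u)] fun w => K * φ z * φ w := by
      refine (ae_restrict_iff' measurableSet_Ioi).2 (ae_of_all _ fun w hw => ?_)
      exact hfle z hz w hw
    have := integral_mono_of_nonneg (ae_of_all _ fun w => hf0 z w) hgi hle
    calc (∫ w in Set.Ioi u, f z w) ≤ ∫ w in Set.Ioi u, K * φ z * φ w := this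
      _ = K * φ z * V := by rw [integral_const_mul, hφval]
  -- outer
  have hgi2 : Integrable (fun z => K * φ z * V) (volume.restrict (Set.Ioi u)) :=
    (hφint.const_mul K).mul_const V
  have hle2 : (fun z => ∫ w in Set.Ioi u, f z w) ≤ᵐ[volume.restrict (Set.Ioi u)]
      fun z => K * φ z * V :=
    (ae_restrict_iff' measurableSet_Ioi).2 (ae_of_all _ fun z hz => hinner z hz)
  have h0 : (0 : ℝ → ℝ) ≤ᵐ[volume.restrict (Set.Ioi u)] fun z => ∫ w in Set.Ioi u, f z w :=
    ae_of_all _ fun z => integral_nonneg fun w => hf0 z w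
  calc (∫ z in Set.Ioi u, ∫ w in Set.Ioi u, f z w)
      ≤ ∫ z in Set.Ioi u, K * φ z * V := integral_mono_of_nonneg h0 hgi2 hle2
    _ = K * V * V := by
        have h : (fun z => K * φ z * V) = fun z => (K * V) * φ z := by funext z; ring
        rw [h, integral_const_mul, hφval]
    _ = K * V^2 := by ring

end Aux

section Main
open MeasureTheory Set Filter Topology

/-- Slepian-type bound: for a centered bivariate Gaussian vector with unit variances and
correlation `ρ ∈ (−1, 1)`, for every `u > 0`,
`P(Z > u, Z_ρ > u) ≤ ((1+ρ)²/(2π u² √(1−ρ²))) exp(−u²/(1+ρ))`,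
where the probability is expressed as the integral of the bivariate normal density. -/
theorem bivariate_gaussian_joint_tail (ρ : ℝ) (hρ : -1 < ρ) (hρ' : ρ < 1) (u : ℝ) (hu : 0 < u) :
    (∫ z in Set.Ioi u, ∫ w in Set.Ioi u,
        (1 / (2 * Real.pi * Real.sqrt (1 - ρ ^ 2))) *
          Real.exp (-(z ^ 2 - 2 * ρ * z * w + w ^ 2) / (2 * (1 - ρ ^ 2))))
      ≤ (1 + ρ) ^ 2 / (2 * Real.pi * u ^ 2 * Real.sqrt (1 - ρ ^ 2)) *
          Real.exp (-u ^ 2 / (1 + ρ)) := by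
  have hs : (0:ℝ) < 1 - ρ ^ 2 := by nlinarith
  have h1ρ : (0:ℝ) < 1 + ρ := by linarith
  have h1ρ' : (0:ℝ) < 1 - ρ := by linarith
  have hsq : (0:ℝ) < Real.sqrt (1 - ρ ^ 2) := Real.sqrt_pos.mpr hs
  set C : ℝ := 1 / (2 * Real.pi * Real.sqrt (1 - ρ ^ 2)) with hC
  have hCpos : 0 < C := by
    apply div_pos one_pos
    positivity
  clear_value C
  have hf0 : ∀ z w : ℝ, 0 ≤ C * Real.exp (-(z ^ 2 - 2 * ρ * z * w + w ^ 2) / (2 * (1 - ρ ^ 2))) :=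
    fun z w => mul_nonneg hCpos.le (Real.exp_pos _).le
  rcases le_or_gt 0 ρ with hρ0 | hρ0
  · -- case 0 ≤ ρ
    set b : ℝ := 1 / (2 * (1 + ρ)) with hb
    have hbpos : 0 < b := by positivity
    clear_value b
    refine le_trans (double_int_bound u b (C / u ^ 2) 0 hbpos (by positivity) hu _ hf0 ?_) ?_
    · intro z hz w hw
      simp only [Set.mem_Ioi] at hz hw
      have hzpos : 0 < z := lt_trans hu hz
      have hwpos : 0 < w := lt_trans hu hw
      have h1 : Real.exp (-(z ^ 2 - 2 * ρ * z * w + w ^ 2) / (2 * (1 - ρ ^ 2)))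
          ≤ Real.exp (-b * z ^ 2) * Real.exp (-b * w ^ 2) := by
        rw [← Real.exp_add, Real.exp_le_exp, div_le_iff₀ (by positivity : (0:ℝ) < 2 * (1 - ρ ^ 2))]
        have key : (-b * z ^ 2 + -b * w ^ 2) * (2 * (1 - ρ ^ 2)) = -((1 - ρ) * (z ^ 2 + w ^ 2)) := by
          rw [hb]; field_simp; ring
        rw [key]
        nlinarith [mul_nonneg hρ0 (sq_nonneg (z - w))]
      have h2 : (1:ℝ) ≤ z * w / u ^ 2 := by
        rw [le_div_iff₀ (by positivity)]; nlinarith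
      have hEpos : 0 < Real.exp (-b * z ^ 2) * Real.exp (-b * w ^ 2) :=
        mul_pos (Real.exp_pos _) (Real.exp_pos _)
      calc C * Real.exp (-(z ^ 2 - 2 * ρ * z * w + w ^ 2) / (2 * (1 - ρ ^ 2)))
          ≤ C * (Real.exp (-b * z ^ 2) * Real.exp (-b * w ^ 2)) :=
            mul_le_mul_of_nonneg_left h1 hCpos.le
        _ ≤ C * (z * w / u ^ 2 * (Real.exp (-b * z ^ 2) * Real.exp (-b * w ^ 2))) :=
            mul_le_mul_of_nonneg_left (le_mul_of_one_le_left hEpos.le h2) hCpos.le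
        _ = C / u ^ 2 * ((z - 0) * Real.exp (-b * (z - 0) ^ 2)) *
              ((w - 0) * Real.exp (-b * (w - 0) ^ 2)) := by
            simp only [sub_zero]; ring
    · -- final arithmetic, case ρ ≤ 0
      have hE : Real.exp (-b * (u - 0) ^ 2) ^ 2 = Real.exp (-u ^ 2 / (1 + ρ)) := by
        rw [pow_two, ← Real.exp_add]
        congr 1
        rw [hb]; field_simp; ring
      apply le_of_eq
      rw [div_pow, hE, hC, hb]
      field_simp
  · -- case ρ < 0
    set b : ℝ := 1 / (2 * (1 - ρ ^ 2)) with hb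
    have hbpos : 0 < b := by positivity
    clear_value b
    have hc : ρ * u < u := by nlinarith
    refine le_trans (double_int_bound u b
      (C * Real.exp (-b * (2 * ρ * (1 - ρ) * u ^ 2)) / ((1 - ρ) * u) ^ 2) (ρ * u)
      hbpos (by positivity) hc _ hf0 ?_) ?_
    · intro z hz w hw
      simp only [Set.mem_Ioi] at hz hw
      have hz1 : (1 - ρ) * u ≤ z - ρ * u := by nlinarith
      have hw1 : (1 - ρ) * u ≤ w - ρ * u := by nlinarith
      have h1 : Real.exp (-(z ^ 2 - 2 * ρ * z * w + w ^ 2) / (2 * (1 - ρ ^ 2)))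
          ≤ Real.exp (-b * (2 * ρ * (1 - ρ) * u ^ 2)) *
            (Real.exp (-b * (z - ρ * u) ^ 2) * Real.exp (-b * (w - ρ * u) ^ 2)) := by
        rw [← Real.exp_add, ← Real.exp_add, Real.exp_le_exp,
          div_le_iff₀ (by positivity : (0:ℝ) < 2 * (1 - ρ ^ 2))]
        have key : (-b * (2 * ρ * (1 - ρ) * u ^ 2) +
              (-b * (z - ρ * u) ^ 2 + -b * (w - ρ * u) ^ 2)) * (2 * (1 - ρ ^ 2))
            = -((2 * ρ * (1 - ρ) * u ^ 2) + (z - ρ * u) ^ 2 + (w - ρ * u) ^ 2) := by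
          rw [hb]; field_simp; ring
        rw [key]
        nlinarith [mul_nonneg (mul_nonneg (neg_nonneg.2 hρ0.le) (sub_nonneg.2 hz.le))
          (sub_nonneg.2 hw.le)]
      have h2 : (1:ℝ) ≤ (z - ρ * u) * (w - ρ * u) / ((1 - ρ) * u) ^ 2 := by
        rw [le_div_iff₀ (by positivity)]
        nlinarith [mul_le_mul hz1 hw1 (by positivity) (by linarith)]
      have hEpos : 0 < Real.exp (-b * (z - ρ * u) ^ 2) * Real.exp (-b * (w - ρ * u) ^ 2) :=
        mul_pos (Real.exp_pos _) (Real.exp_pos _)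
      calc C * Real.exp (-(z ^ 2 - 2 * ρ * z * w + w ^ 2) / (2 * (1 - ρ ^ 2)))
          ≤ C * (Real.exp (-b * (2 * ρ * (1 - ρ) * u ^ 2)) *
              (Real.exp (-b * (z - ρ * u) ^ 2) * Real.exp (-b * (w - ρ * u) ^ 2))) :=
            mul_le_mul_of_nonneg_left h1 hCpos.le
        _ ≤ C * (Real.exp (-b * (2 * ρ * (1 - ρ) * u ^ 2)) *
              ((z - ρ * u) * (w - ρ * u) / ((1 - ρ) * u) ^ 2 *
                (Real.exp (-b * (z - ρ * u) ^ 2) * Real.exp (-b * (w - ρ * u) ^ 2)))) :=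
            mul_le_mul_of_nonneg_left (mul_le_mul_of_nonneg_left
              (le_mul_of_one_le_left hEpos.le h2) (Real.exp_pos _).le) hCpos.le
        _ = C * Real.exp (-b * (2 * ρ * (1 - ρ) * u ^ 2)) / ((1 - ρ) * u) ^ 2 *
              ((z - ρ * u) * Real.exp (-b * (z - ρ * u) ^ 2)) *
              ((w - ρ * u) * Real.exp (-b * (w - ρ * u) ^ 2)) := by ring
    · -- final arithmetic, case ρ < 0
      have hE : Real.exp (-b * (2 * ρ * (1 - ρ) * u ^ 2)) *
          Real.exp (-b * (u - ρ * u) ^ 2) ^ 2 = Real.exp (-u ^ 2 / (1 + ρ)) := by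
        have e2 : Real.exp (-b * (u - ρ * u) ^ 2) ^ 2
            = Real.exp (-b * (u - ρ * u) ^ 2 + -b * (u - ρ * u) ^ 2) := by
          rw [Real.exp_add, sq]
        rw [e2, ← Real.exp_add]
        congr 1
        rw [hb]; field_simp; ring
      apply le_of_eq
      calc C * Real.exp (-b * (2 * ρ * (1 - ρ) * u ^ 2)) / ((1 - ρ) * u) ^ 2 *
            (Real.exp (-b * (u - ρ * u) ^ 2) / (2 * b)) ^ 2
          = C * (Real.exp (-b * (2 * ρ * (1 - ρ) * u ^ 2)) *
              Real.exp (-b * (u - ρ * u) ^ 2) ^ 2) / (((1 - ρ) * u) ^ 2 * (2 * b) ^ 2) := by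
            rw [div_pow, div_mul_div_comm, mul_assoc]
        _ = C * Real.exp (-u ^ 2 / (1 + ρ)) / (((1 - ρ) * u) ^ 2 * (2 * b) ^ 2) := by rw [hE]
        _ = (1 + ρ) ^ 2 / (2 * Real.pi * u ^ 2 * Real.sqrt (1 - ρ ^ 2)) *
              Real.exp (-u ^ 2 / (1 + ρ)) := by
            have h2b : (2 * b) = 1 / (1 - ρ ^ 2) := by rw [hb]; field_simp
            have hco : C / (((1 - ρ) * u) ^ 2 * (2 * b) ^ 2)
                = (1 + ρ) ^ 2 / (2 * Real.pi * u ^ 2 * Real.sqrt (1 - ρ ^ 2)) := by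
              rw [h2b, hC]
              rw [div_eq_div_iff (by positivity) (by positivity)]
              field_simp
              ring
            calc C * Real.exp (-u ^ 2 / (1 + ρ)) / (((1 - ρ) * u) ^ 2 * (2 * b) ^ 2)
                = C / (((1 - ρ) * u) ^ 2 * (2 * b) ^ 2) * Real.exp (-u ^ 2 / (1 + ρ)) := by
                  ring
              _ = (1 + ρ) ^ 2 / (2 * Real.pi * u ^ 2 * Real.sqrt (1 - ρ ^ 2)) *
                  Real.exp (-u ^ 2 / (1 + ρ)) := by rw [hco]

end Main
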